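/- Let l₁,…,l_k : ℝⁿ → ℝ be affine functions (degree-1 polynomials) and let f : ℝⁿ → ℝ be f(x) = ∏_{i=1}^k l_i(x). Then there exists ε₀ > 0 such that every ε with 0 < ε ≤ ε₀ is a regular value of f, i.e., for every x ∈ ℝⁿ with f(x) = ε, the derivative Df(x) is nonzero. -/

import Mathlib

open Finset

/-- Algebraic key: if `∑ (v i - u i)/u i = 0`, `∑ (u i - v i)/v i = 0` and each
`u i * v i > 0`, then `u = v`. -/
lemma stmt7_alg {k : ℕ} (u v : Fin k → ℝ) (hpos : ∀ i, 0 < u i * v i)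
    (h1 : ∑ i, (v i - u i) / u i = 0) (h2 : ∑ i, (u i - v i) / v i = 0) : u = v := by
  have hu : ∀ i, u i ≠ 0 := fun i => by
    intro h; have := hpos i; rw [h] at this; simp at this
  have hv : ∀ i, v i ≠ 0 := fun i => by
    intro h; have := hpos i; rw [h] at this; simp at this
  have hsum : ∑ i, (v i - u i) ^ 2 / (u i * v i) = 0 := by
    have hadd : ∑ i, ((v i - u i) / u i + (u i - v i) / v i) = 0 := by
      rw [Finset.sum_add_distrib, h1, h2, add_zero]
    rw [← hadd]
    refine Finset.sum_congr rfl fun i _ => ?_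
    field_simp [hu i, hv i]
    ring
  have hzero : ∀ i ∈ Finset.univ, (v i - u i) ^ 2 / (u i * v i) = 0 := by
    refine (Finset.sum_eq_zero_iff_of_nonneg fun i _ => ?_).mp hsum
    exact div_nonneg (sq_nonneg _) (hpos i).le
  funext i
  have hi := hzero i (Finset.mem_univ i)
  have h2 : (v i - u i) ^ 2 = 0 := by
    rcases div_eq_zero_iff.mp hi with h | h
    · exact h
    · exact absurd h (mul_ne_zero (hu i) (hv i))
  have := pow_eq_zero_iff (n := 2) (by norm_num) |>.mp h2
  linarith [sub_eq_zero.mp this]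

/-- Let `l₁, …, l_k : ℝⁿ → ℝ` be affine functions and `f x = ∏ i, l i x`.
Then there is `ε₀ > 0` such that every `ε` with `0 < ε ≤ ε₀` is a regular value of `f`. -/
theorem stmt7 (n k : ℕ) (a : Fin k → (Fin n → ℝ)) (c : Fin k → ℝ)
    (f : (Fin n → ℝ) → ℝ) (hf : ∀ x, f x = ∏ i, ((∑ j, a i j * x j) + c i)) :
    ∃ ε₀ : ℝ, 0 < ε₀ ∧ ∀ ε : ℝ, 0 < ε → ε ≤ ε₀ →
      ∀ x : Fin n → ℝ, f x = ε → fderiv ℝ f x ≠ 0 := by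
  classical
  set ℓ : Fin k → (Fin n → ℝ) → ℝ := fun i x => (∑ j, a i j * x j) + c i with hℓ
  set L : Fin k → ((Fin n → ℝ) →L[ℝ] ℝ) :=
    fun i => ∑ j, a i j • (ContinuousLinearMap.proj j : (Fin n → ℝ) →L[ℝ] ℝ) with hLdef
  -- each ℓ i is differentiable with derivative L i
  have hL : ∀ i x, HasFDerivAt (ℓ i) (L i) x := by
    intro i x
    have h1 : HasFDerivAt (fun x : Fin n → ℝ => ∑ j, a i j * x j)
        (∑ j, a i j • (ContinuousLinearMap.proj j : (Fin n → ℝ) →L[ℝ] ℝ)) x :=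
      HasFDerivAt.fun_sum fun j _ =>
        ((ContinuousLinearMap.proj j : (Fin n → ℝ) →L[ℝ] ℝ).hasFDerivAt.const_mul (a i j))
    exact h1.add_const (c i)
  -- derivative of f
  have hD : ∀ x, fderiv ℝ f x = ∑ i, (∏ j ∈ Finset.univ.erase i, ℓ j x) • L i := by
    intro x
    have hfe : f = fun x => ∏ i, ℓ i x := funext hf
    have hprod : HasFDerivAt (∏ i ∈ Finset.univ, ℓ i ·)
        (∑ i ∈ Finset.univ, (∏ j ∈ Finset.univ.erase i, ℓ j x) • L i) x :=
      HasFDerivAt.finset_prod fun i _ => hL i x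
    rw [hfe]
    exact hprod.fderiv
  -- evaluation of L i
  have hLapp : ∀ i (x y : Fin n → ℝ), L i (y - x) = ℓ i y - ℓ i x := by
    intro i x y
    simp only [hLdef, ContinuousLinearMap.coe_sum', Finset.sum_apply,
      ContinuousLinearMap.coe_smul', Pi.smul_apply, ContinuousLinearMap.proj_apply,
      Pi.sub_apply, smul_eq_mul, hℓ]
    have hs : ∑ j, a i j * (y j - x j) = ∑ j, (a i j * y j - a i j * x j) :=
      Finset.sum_congr rfl fun j _ => by ring
    rw [hs, Finset.sum_sub_distrib]
    ring
  -- directional-derivative identity at a critical point z, in direction w - z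
  have main : ∀ z w : Fin n → ℝ, fderiv ℝ f z = 0 → 0 < f z → (∀ i, ℓ i z ≠ 0) →
      ∑ i, (ℓ i w - ℓ i z) / ℓ i z = 0 := by
    intro z w hz hfz huz
    have h0 : (fderiv ℝ f z) (w - z) = 0 := by rw [hz]; rfl
    rw [hD] at h0
    simp only [ContinuousLinearMap.coe_sum', Finset.sum_apply,
      ContinuousLinearMap.coe_smul', Pi.smul_apply, smul_eq_mul] at h0
    have h1 : ∑ i, (∏ j ∈ Finset.univ.erase i, ℓ j z) * (ℓ i w - ℓ i z) = 0 := by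
      rw [← h0]
      exact Finset.sum_congr rfl fun i _ => by rw [hLapp i z w]
    have h2 : ∀ i, (∏ j ∈ Finset.univ.erase i, ℓ j z) = f z / ℓ i z := by
      intro i
      have hme := Finset.mul_prod_erase Finset.univ (fun j => ℓ j z) (Finset.mem_univ i)
      have hfz' : ∏ j, ℓ j z = f z := (hf z).symm
      rw [eq_div_iff (huz i), mul_comm]
      rw [hme, hfz']
    have h3 : f z * ∑ i, (ℓ i w - ℓ i z) / ℓ i z = 0 := by
      rw [Finset.mul_sum, ← h1]
      refine Finset.sum_congr rfl fun i _ => ?_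
      rw [h2 i]
      field_simp
    exact (mul_eq_zero.mp h3).resolve_left (ne_of_gt hfz)
  -- key comparison of critical values with the same sign pattern
  have key : ∀ x y : Fin n → ℝ, fderiv ℝ f x = 0 → fderiv ℝ f y = 0 →
      0 < f x → 0 < f y → (∀ i, 0 < ℓ i x * ℓ i y) → f x = f y := by
    intro x y hx hy hfx hfy hsign
    have hux : ∀ i, ℓ i x ≠ 0 := by
      intro i h; have := hsign i; rw [h] at this; simp at this
    have huy : ∀ i, ℓ i y ≠ 0 := by
      intro i h; have := hsign i; rw [h] at this; simp at this
    have h1 := main x y hx hfx hux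
    have h2 := main y x hy hfy huy
    have heq : (fun i => ℓ i x) = fun i => ℓ i y := stmt7_alg _ _ hsign h1 h2
    rw [hf x, hf y]
    exact Finset.prod_congr rfl fun i _ => congrFun heq i
  -- the set of positive critical values
  set V : Set ℝ := {ε | 0 < ε ∧ ∃ x, f x = ε ∧ fderiv ℝ f x = 0} with hV
  -- nonvanishing of the factors at points with positive value
  have hnz : ∀ x : Fin n → ℝ, 0 < f x → ∀ i, ℓ i x ≠ 0 := by
    intro x hx i h
    have : ∏ j, ℓ j x ≠ 0 := by rw [← hf x] at *; exact ne_of_gt hx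
    exact (Finset.prod_ne_zero_iff.mp this i (Finset.mem_univ i)) h
  -- V is finite, via the injection into sign patterns
  have hVfin : V.Finite := by
    set P : ℝ → (Fin k → Bool) := fun ε =>
      if h : ε ∈ V then (fun i => decide (0 < ℓ i h.2.choose)) else (fun _ => false) with hP
    have hinj : Set.InjOn P V := by
      intro ε hε ε' hε' hPe
      rw [hP] at hPe
      simp only [dif_pos hε, dif_pos hε'] at hPe
      obtain ⟨hεpos, hex⟩ := hε
      obtain ⟨hε'pos, hex'⟩ := hε'
      set x := hex.choose with hx
      set y := hex'.choose with hy
      have hxp : f x = ε ∧ fderiv ℝ f x = 0 := hex.choose_spec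
      have hyp : f y = ε' ∧ fderiv ℝ f y = 0 := hex'.choose_spec
      have hfx : 0 < f x := hxp.1 ▸ hεpos
      have hfy : 0 < f y := hyp.1 ▸ hε'pos
      have hsign : ∀ i, 0 < ℓ i x * ℓ i y := by
        intro i
        have hpe := congrFun hPe i
        simp only [decide_eq_decide] at hpe
        have hnx := hnz x hfx i
        have hny := hnz y hfy i
        rcases hnx.lt_or_gt with hl | hl
        · have : ¬ (0 < ℓ i x) := not_lt.mpr hl.le
          have hny' : ¬ (0 < ℓ i y) := fun h => this (hpe.mpr h)
          exact mul_pos_of_neg_of_neg hl (hny.lt_or_gt.resolve_right hny')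
        · exact mul_pos hl (hpe.mp hl)
      rw [← hxp.1, ← hyp.1]
      exact key x y hxp.2 hyp.2 hfx hfy hsign
    exact Set.Finite.of_finite_image (Set.toFinite _) hinj
  -- conclude
  by_cases hVne : V.Nonempty
  · set m := hVfin.toFinset.min' (by simpa using hVne) with hm
    have hmV : m ∈ V := by
      have := hVfin.toFinset.min'_mem (by simpa using hVne)
      simpa using this
    have hmpos : 0 < m := hmV.1
    refine ⟨m / 2, by linarith, fun ε hε hε' x hx hcrit => ?_⟩
    have hεV : ε ∈ V := ⟨hε, x, hx, hcrit⟩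
    have : m ≤ ε := hVfin.toFinset.min'_le ε (by simpa using hεV)
    linarith
  · refine ⟨1, one_pos, fun ε hε _ x hx hcrit => ?_⟩
    exact hVne ⟨ε, hε, x, hx, hcrit⟩
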